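/- Fix an integer N ≥ 2 and a constant M > 1. There exists a constant C₀ > 0, depending only on N and M, such that for every Lipschitz function f : Q' → [1, M] and every function u : ℝ^N → ℝ that is continuously differentiable on an open neighborhood of the closure of Q_f, one has ∫_{Q_f} u² dx ≤ C₀ ( ∫_A u² dx + ∫_{Q_f} |∇u|² dx ), where A := (0,1)^{N−1} × (0,1). -/

import Mathlib

open Set MeasureTheory
open scoped ENNReal
noncomputable section

/-- Projection onto the first `d` coordinates. -/
def proj {d : ℕ} (x : EuclideanSpace ℝ (Fin (d + 1))) : EuclideanSpace ℝ (Fin d) :=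
  WithLp.toLp 2 (fun i : Fin d => x i.castSucc)

/-- Embedding of the base `Q' × {0}`. -/
def embed {d : ℕ} (y : EuclideanSpace ℝ (Fin d)) : EuclideanSpace ℝ (Fin (d + 1)) :=
  WithLp.toLp 2 (fun i : Fin (d + 1) => if h : (i : ℕ) < d then y ⟨i, h⟩ else 0)

/-- The open unit cube `Q' = (0,1)^d`. -/
def cube (d : ℕ) : Set (EuclideanSpace ℝ (Fin d)) :=
  {y | ∀ i, y i ∈ Ioo (0 : ℝ) 1}

/-- The open subgraph domain `Q_f`. -/
def Qf {d : ℕ} (f : EuclideanSpace ℝ (Fin d) → ℝ) : Set (EuclideanSpace ℝ (Fin (d + 1))) :=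
  {x | proj x ∈ cube d ∧ x (Fin.last d) ∈ Ioo 0 (f (proj x))}

def lift' {d : ℕ} (y : Fin d → ℝ) (t : ℝ) : EuclideanSpace ℝ (Fin (d + 1)) := WithLp.toLp 2 (Fin.snoc (α := fun _ : Fin (d+1) => ℝ) y t)

lemma hasDerivAt_lift' {d : ℕ} (y : Fin d → ℝ) (t : ℝ) :
    HasDerivAt (fun t => lift' y t) (EuclideanSpace.single (Fin.last d) (1:ℝ)) t := by
  have hrw : (fun t => lift' y t)
      = fun t : ℝ => lift' y 0 + t • EuclideanSpace.single (Fin.last d) (1:ℝ) := by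
    funext s
    apply PiLp.ext
    intro i
    induction i using Fin.lastCases with
    | last => simp [lift', EuclideanSpace.single_apply, PiLp.add_apply, PiLp.smul_apply]
    | cast j => simp [lift', EuclideanSpace.single_apply, PiLp.add_apply, PiLp.smul_apply,
        (Fin.castSucc_lt_last j).ne]
  rw [hrw]
  simpa using ((hasDerivAt_id t).smul_const
    (EuclideanSpace.single (Fin.last d) (1:ℝ))).const_add (lift' y 0)

lemma continuous_lift' {d : ℕ} (y : Fin d → ℝ) : Continuous (fun t => lift' y t) := by
  have hrw : (fun t => lift' y t)
      = fun t : ℝ => lift' y 0 + t • EuclideanSpace.single (Fin.last d) (1:ℝ) := by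
    funext s; apply PiLp.ext; intro i
    induction i using Fin.lastCases with
    | last => simp [lift', EuclideanSpace.single_apply, PiLp.add_apply, PiLp.smul_apply]
    | cast j => simp [lift', EuclideanSpace.single_apply, PiLp.add_apply, PiLp.smul_apply,
        (Fin.castSucc_lt_last j).ne]
  rw [hrw]
  exact continuous_const.add (continuous_id.smul continuous_const)

lemma slice_real {d : ℕ} {M : ℝ} (hM : 1 < M)
    {u : EuclideanSpace ℝ (Fin (d+1)) → ℝ} {U : Set (EuclideanSpace ℝ (Fin (d+1)))}
    (hU : IsOpen U) (hu : ContDiffOn ℝ 1 u U) {y : Fin d → ℝ} {b : ℝ}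
    (hb1 : 1 ≤ b) (hbM : b ≤ M)
    (hx : ∀ t ∈ Icc (0:ℝ) b, lift' y t ∈ U) {s : ℝ} (hs : s ∈ Ioo (0:ℝ) 1) :
    ∫ t in (0:ℝ)..b, (u (lift' y t))^2
      ≤ 2*M*(u (lift' y s))^2 + 4*M^2 * ∫ t in (0:ℝ)..b, ‖gradient u (lift' y t)‖^2 := by
  have hM0 : (0:ℝ) < M := lt_trans one_pos hM
  have hb0 : (0:ℝ) < b := lt_of_lt_of_le one_pos hb1
  have hsIcc : s ∈ Icc (0:ℝ) b := ⟨hs.1.le, hs.2.le.trans hb1⟩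
  set e : EuclideanSpace ℝ (Fin (d+1)) := EuclideanSpace.single (Fin.last d) (1:ℝ) with he
  set g : ℝ → ℝ := fun t => u (lift' y t) with hg
  set g' : ℝ → ℝ := fun t => fderiv ℝ u (lift' y t) e with hg'
  set D : ℝ → ℝ := fun t => ‖gradient u (lift' y t)‖ with hD
  have hLc : ContinuousOn (fun t : ℝ => lift' y t) (Icc 0 b) := (continuous_lift' y).continuousOn
  have hgc : ContinuousOn g (Icc 0 b) := hu.continuousOn.comp hLc hx
  have hfderivc : ContinuousOn (fderiv ℝ u) U := hu.continuousOn_fderiv_of_isOpen hU le_rfl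
  have hfC : ContinuousOn (fun t => fderiv ℝ u (lift' y t)) (Icc 0 b) := hfderivc.comp hLc hx
  have hg'c : ContinuousOn g' (Icc 0 b) := hfC.clm_apply continuousOn_const
  have hgradc : ContinuousOn (fun t => gradient u (lift' y t)) (Icc 0 b) := by
    show ContinuousOn (fun t => (InnerProductSpace.toDual ℝ _).symm (fderiv ℝ u (lift' y t))) _
    exact (InnerProductSpace.toDual ℝ _).symm.continuous.comp_continuousOn hfC
  have hDc : ContinuousOn D (Icc 0 b) := hgradc.norm
  have hdiff : ∀ t ∈ Icc (0:ℝ) b, DifferentiableAt ℝ u (lift' y t) := fun t ht =>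
    (hu.contDiffAt (hU.mem_nhds (hx t ht))).differentiableAt one_ne_zero
  have hder : ∀ t ∈ Icc (0:ℝ) b, HasDerivAt g (g' t) t := fun t ht =>
    (hdiff t ht).hasFDerivAt.comp_hasDerivAt t (hasDerivAt_lift' y t)
  have hg'le : ∀ t ∈ Icc (0:ℝ) b, |g' t| ≤ D t := by
    intro t ht
    have h1 : fderiv ℝ u (lift' y t)
        = InnerProductSpace.toDual ℝ _ (gradient u (lift' y t)) :=
      ((InnerProductSpace.toDual ℝ _).apply_symm_apply (fderiv ℝ u (lift' y t))).symm
    have h2 : g' t = (inner ℝ (gradient u (lift' y t)) e : ℝ) := by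
      rw [hg']; simp only [h1, InnerProductSpace.toDual_apply_apply]
    have h3 : |(inner ℝ (gradient u (lift' y t)) e : ℝ)| ≤ ‖gradient u (lift' y t)‖ * ‖e‖ :=
      abs_real_inner_le_norm _ _
    have h4 : ‖e‖ = 1 := by rw [he]; rw [EuclideanSpace.norm_single]; norm_num
    rw [h2]
    calc |(inner ℝ (gradient u (lift' y t)) e : ℝ)| ≤ ‖gradient u (lift' y t)‖ * ‖e‖ := h3
      _ = D t := by rw [h4, hD]; ring
  -- integrability infrastructure
  have hIcc_eq : uIcc (0:ℝ) b = Icc 0 b := uIcc_of_le hb0.le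
  have hInt : ∀ {h : ℝ → ℝ}, ContinuousOn h (Icc 0 b) → IntervalIntegrable h volume 0 b := by
    intro h hc
    apply ContinuousOn.intervalIntegrable
    rw [hIcc_eq]; exact hc
  have hg2c : ContinuousOn (fun t => g t ^ 2) (Icc 0 b) := hgc.pow 2
  have hg'2c : ContinuousOn (fun t => g' t ^ 2) (Icc 0 b) := hg'c.pow 2
  have hD2c : ContinuousOn (fun t => D t ^ 2) (Icc 0 b) := hDc.pow 2
  have hgg'c : ContinuousOn (fun t => 2 * g t * g' t) (Icc 0 b) :=
    (continuousOn_const.mul hgc).mul hg'c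
  set I : ℝ := ∫ t in (0:ℝ)..b, g t ^ 2 with hIdef
  set K : ℝ := ∫ t in (0:ℝ)..b, g' t ^ 2 with hKdef
  set KD : ℝ := ∫ t in (0:ℝ)..b, D t ^ 2 with hKDdef
  set P : ℝ → ℝ := fun t => (1/(2*M)) * g t ^ 2 + (2*M) * g' t ^ 2 with hPdef
  have hPc : ContinuousOn P (Icc 0 b) := (continuousOn_const.mul hg2c).add
    (continuousOn_const.mul hg'2c)
  have hPval : ∫ t in (0:ℝ)..b, P t = (1/(2*M)) * I + (2*M) * K := by
    rw [hPdef, intervalIntegral.integral_add ((hInt hg2c).const_mul _) ((hInt hg'2c).const_mul _),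
      intervalIntegral.integral_const_mul, intervalIntegral.integral_const_mul]
  -- pointwise |2gg'| ≤ P
  have habsP : ∀ t ∈ Icc (0:ℝ) b, |2 * g t * g' t| ≤ P t := by
    intro t _
    have hP : P t = (g t ^ 2 + 4*M^2*g' t ^ 2) / (2*M) := by
      rw [hPdef]; field_simp; ring
    have h1 : 2 * g t * g' t * (2*M) ≤ g t ^ 2 + 4*M^2*g' t ^ 2 := by
      nlinarith [sq_nonneg (g t - 2*M*g' t)]
    have h2 : -(g t ^ 2 + 4*M^2*g' t ^ 2) ≤ 2 * g t * g' t * (2*M) := by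
      nlinarith [sq_nonneg (g t + 2*M*g' t)]
    rw [abs_le]
    constructor
    · rw [hP, ← neg_div, div_le_iff₀ (by positivity : (0:ℝ) < 2*M)]
      linarith
    · rw [hP, le_div_iff₀ (by positivity : (0:ℝ) < 2*M)]
      linarith
  -- FTC bound
  have key : ∀ t ∈ Icc (0:ℝ) b, g t ^ 2 ≤ g s ^ 2 + ((1/(2*M)) * I + (2*M) * K) := by
    intro t ht
    have hsub : uIcc s t ⊆ Icc (0:ℝ) b := uIcc_subset_Icc hsIcc ht
    have hftc : ∫ r in s..t, (2 * g r * g' r) = g t ^ 2 - g s ^ 2 := by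
      apply intervalIntegral.integral_eq_sub_of_hasDerivAt
      · intro r hr
        have := (hder r (hsub hr)).pow 2
        norm_num at this
        exact this
      · exact (hgg'c.mono hsub).intervalIntegrable
    have habs2 : ∀ a₁ a₂, a₁ ∈ Icc (0:ℝ) b → a₂ ∈ Icc (0:ℝ) b → a₁ ≤ a₂ →
        |∫ r in a₁..a₂, 2 * g r * g' r| ≤ ∫ r in (0:ℝ)..b, P r := by
      intro a₁ a₂ h₁ h₂ h₁₂
      calc |∫ r in a₁..a₂, 2 * g r * g' r| ≤ ∫ r in a₁..a₂, |2 * g r * g' r| :=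
            intervalIntegral.abs_integral_le_integral_abs h₁₂
        _ ≤ ∫ r in (0:ℝ)..b, |2 * g r * g' r| := by
            apply intervalIntegral.integral_mono_interval h₁.1 h₁₂ h₂.2
            · filter_upwards with r using abs_nonneg _
            · exact hInt hgg'c.abs
        _ ≤ ∫ r in (0:ℝ)..b, P r :=
            intervalIntegral.integral_mono_on hb0.le (hInt hgg'c.abs) (hInt hPc) habsP
    have hb2 : |∫ r in s..t, 2 * g r * g' r| ≤ ∫ r in (0:ℝ)..b, P r := by
      rcases le_total s t with h | h
      · exact habs2 s t hsIcc ht h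
      · rw [intervalIntegral.integral_symm, abs_neg]
        exact habs2 t s ht hsIcc h
    rw [hPval] at hb2
    have := le_trans (le_abs_self _) hb2
    linarith [this, hftc.symm ▸ this]
  -- integrate over t
  have hIle : I ≤ b * (g s ^ 2 + ((1/(2*M)) * I + (2*M) * K)) := by
    calc I ≤ ∫ _t in (0:ℝ)..b, (g s ^ 2 + ((1/(2*M)) * I + (2*M) * K)) :=
          intervalIntegral.integral_mono_on hb0.le (hInt hg2c) intervalIntegrable_const key
      _ = b * (g s ^ 2 + ((1/(2*M)) * I + (2*M) * K)) := by
          rw [intervalIntegral.integral_const, smul_eq_mul, sub_zero]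
  have hKle : K ≤ KD := by
    apply intervalIntegral.integral_mono_on hb0.le (hInt hg'2c) (hInt hD2c)
    intro t ht
    have h1 := hg'le t ht
    have h2 := abs_le.mp h1
    nlinarith [abs_nonneg (g' t)]
  have hI0 : 0 ≤ I := intervalIntegral.integral_nonneg hb0.le (fun t _ => sq_nonneg _)
  have hK0 : 0 ≤ K := intervalIntegral.integral_nonneg hb0.le (fun t _ => sq_nonneg _)
  have hKD0 : 0 ≤ KD := intervalIntegral.integral_nonneg hb0.le (fun t _ => sq_nonneg _)
  have hgs0 : 0 ≤ g s ^ 2 := sq_nonneg _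
  show I ≤ 2*M*(g s)^2 + 4*M^2 * KD
  have e1 : b * g s ^ 2 ≤ M * g s ^ 2 := mul_le_mul_of_nonneg_right hbM hgs0
  have e2 : b * I ≤ M * I := mul_le_mul_of_nonneg_right hbM hI0
  have e3 : b * K ≤ M * K := mul_le_mul_of_nonneg_right hbM hK0
  have e4 : M * K ≤ M * KD := mul_le_mul_of_nonneg_left hKle hM0.le
  have c1 : (0:ℝ) ≤ 1/(2*M) := by positivity
  have e5 : (1/(2*M)) * (b*I) ≤ (1/(2*M)) * (M*I) := mul_le_mul_of_nonneg_left e2 c1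
  have e6 : (1/(2*M)) * (M*I) = I/2 := by field_simp
  have e7 : (2*M)*(b*K) ≤ (2*M)*(M*KD) := mul_le_mul_of_nonneg_left (e3.trans e4) (by positivity)
  have e8 : (2*M)*(M*KD) = 2*M^2*KD := by ring
  have hIle' : I ≤ b * g s ^ 2 + (1/(2*M))*(b*I) + (2*M)*(b*K) := by
    calc I ≤ b * (g s ^ 2 + ((1/(2*M)) * I + (2*M) * K)) := hIle
      _ = b * g s ^ 2 + (1/(2*M))*(b*I) + (2*M)*(b*K) := by ring
  linarith [e1, e5, e6, e7, e8, hIle']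

lemma slice_ennreal {d : ℕ} {M : ℝ} (hM : 1 < M)
    {u : EuclideanSpace ℝ (Fin (d+1)) → ℝ} {U : Set (EuclideanSpace ℝ (Fin (d+1)))}
    (hU : IsOpen U) (hu : ContDiffOn ℝ 1 u U) {y : Fin d → ℝ} {b : ℝ}
    (hb1 : 1 ≤ b) (hbM : b ≤ M)
    (hx : ∀ t ∈ Icc (0:ℝ) b, lift' y t ∈ U) :
    ∫⁻ t in Ioo (0:ℝ) b, ENNReal.ofReal ((u (lift' y t))^2)
      ≤ ENNReal.ofReal (2*M) * (∫⁻ t in Ioo (0:ℝ) 1, ENNReal.ofReal ((u (lift' y t))^2))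
        + ENNReal.ofReal (4*M^2) * (∫⁻ t in Ioo (0:ℝ) b, ENNReal.ofReal (‖gradient u (lift' y t)‖^2)) := by
  have hM0 : (0:ℝ) < M := lt_trans one_pos hM
  have hb0 : (0:ℝ) < b := lt_of_lt_of_le one_pos hb1
  set g : ℝ → ℝ := fun t => u (lift' y t) with hgdef
  set D : ℝ → ℝ := fun t => ‖gradient u (lift' y t)‖ with hDdef
  have hLc : ContinuousOn (fun t : ℝ => lift' y t) (Icc 0 b) := (continuous_lift' y).continuousOn
  have hgc : ContinuousOn g (Icc 0 b) := hu.continuousOn.comp hLc hx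
  have hfderivc : ContinuousOn (fderiv ℝ u) U := hu.continuousOn_fderiv_of_isOpen hU le_rfl
  have hfC : ContinuousOn (fun t => fderiv ℝ u (lift' y t)) (Icc 0 b) := hfderivc.comp hLc hx
  have hgradc : ContinuousOn (fun t => gradient u (lift' y t)) (Icc 0 b) := by
    show ContinuousOn (fun t => (InnerProductSpace.toDual ℝ _).symm (fderiv ℝ u (lift' y t))) _
    exact (InnerProductSpace.toDual ℝ _).symm.continuous.comp_continuousOn hfC
  have hDc : ContinuousOn D (Icc 0 b) := hgradc.norm
  have hg2c : ContinuousOn (fun t => g t ^ 2) (Icc 0 b) := hgc.pow 2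
  have hD2c : ContinuousOn (fun t => D t ^ 2) (Icc 0 b) := hDc.pow 2
  -- integrability on Ioo's
  have hg2i : IntegrableOn (fun t => g t ^ 2) (Ioo (0:ℝ) b) :=
    (hg2c.integrableOn_compact isCompact_Icc).mono_set Ioo_subset_Icc_self
  have hg2i1 : IntegrableOn (fun t => g t ^ 2) (Ioo (0:ℝ) 1) :=
    (hg2c.integrableOn_compact isCompact_Icc).mono_set
      (fun t ht => ⟨ht.1.le, ht.2.le.trans hb1⟩)
  have hD2i : IntegrableOn (fun t => D t ^ 2) (Ioo (0:ℝ) b) :=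
    (hD2c.integrableOn_compact isCompact_Icc).mono_set Ioo_subset_Icc_self
  set IIoo : ℝ := ∫ t in Ioo (0:ℝ) b, g t ^ 2 with hIdef
  set KDIoo : ℝ := ∫ t in Ioo (0:ℝ) b, D t ^ 2 with hKDdef
  have hIval : ∫ t in (0:ℝ)..b, g t ^ 2 = IIoo := by
    rw [intervalIntegral.integral_of_le hb0.le, integral_Ioc_eq_integral_Ioo]
  have hKDval : ∫ t in (0:ℝ)..b, D t ^ 2 = KDIoo := by
    rw [intervalIntegral.integral_of_le hb0.le, integral_Ioc_eq_integral_Ioo]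
  have hKD0 : 0 ≤ KDIoo := setIntegral_nonneg measurableSet_Ioo (fun t _ => sq_nonneg _)
  -- lintegral/integral conversions
  have hLHS : ∫⁻ t in Ioo (0:ℝ) b, ENNReal.ofReal (g t ^ 2) = ENNReal.ofReal IIoo :=
    (ofReal_integral_eq_lintegral_ofReal hg2i
      (Filter.Eventually.of_forall fun t => sq_nonneg _)).symm
  have hKDL : ∫⁻ t in Ioo (0:ℝ) b, ENNReal.ofReal (D t ^ 2) = ENNReal.ofReal KDIoo :=
    (ofReal_integral_eq_lintegral_ofReal hD2i
      (Filter.Eventually.of_forall fun t => sq_nonneg _)).symm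
  -- AE measurability of s ↦ ofReal (g s ^ 2) on Ioo 0 1
  have hgm : AEMeasurable (fun s => ENNReal.ofReal (g s ^ 2)) (volume.restrict (Ioo (0:ℝ) 1)) :=
    ENNReal.measurable_ofReal.comp_aemeasurable
      ((hg2c.mono (fun t ht => ⟨ht.1.le, ht.2.le.trans hb1⟩)).aemeasurable measurableSet_Ioo)
  rw [hLHS, hKDL]
  have hvol : (volume (Ioo (0:ℝ) 1)) = 1 := by simp [Real.volume_Ioo]
  have step1 : ENNReal.ofReal IIoo
      ≤ ∫⁻ s in Ioo (0:ℝ) 1, (ENNReal.ofReal (2*M) * ENNReal.ofReal (g s ^ 2)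
          + ENNReal.ofReal (4*M^2 * KDIoo)) ∂volume := by
    have h0 : ENNReal.ofReal IIoo = ∫⁻ _s in Ioo (0:ℝ) 1, ENNReal.ofReal IIoo ∂volume := by
      rw [setLIntegral_const, hvol, mul_one]
    rw [h0]
    apply setLIntegral_mono_ae ((hgm.const_mul _).add aemeasurable_const)
    filter_upwards with s hs
    have hsr := slice_real hM hU hu hb1 hbM hx hs
    rw [hIval, hKDval] at hsr
    calc ENNReal.ofReal IIoo ≤ ENNReal.ofReal (2*M*(g s)^2 + 4*M^2 * KDIoo) :=
          ENNReal.ofReal_le_ofReal hsr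
      _ = ENNReal.ofReal (2*M) * ENNReal.ofReal (g s ^ 2) + ENNReal.ofReal (4*M^2 * KDIoo) := by
          rw [ENNReal.ofReal_add (by positivity) (by positivity), ENNReal.ofReal_mul (by positivity)]
  have step2 : ∫⁻ s in Ioo (0:ℝ) 1, (ENNReal.ofReal (2*M) * ENNReal.ofReal (g s ^ 2)
          + ENNReal.ofReal (4*M^2 * KDIoo)) ∂volume
      = ENNReal.ofReal (2*M) * (∫⁻ s in Ioo (0:ℝ) 1, ENNReal.ofReal (g s ^ 2))
          + ENNReal.ofReal (4*M^2) * ENNReal.ofReal KDIoo := by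
    rw [lintegral_add_right' _ aemeasurable_const, setLIntegral_const, hvol, mul_one,
      lintegral_const_mul' _ _ ENNReal.ofReal_ne_top,
      ENNReal.ofReal_mul (by positivity : (0:ℝ) ≤ 4*M^2)]
  exact step1.trans (le_of_eq step2)

section Transport
variable {d : ℕ}

/-- The product-space version of `Qf`. -/
def Sf (f : EuclideanSpace ℝ (Fin d) → ℝ) : Set (ℝ × (Fin d → ℝ)) :=
  {p | (∀ i, p.2 i ∈ Ioo (0:ℝ) 1) ∧ p.1 ∈ Ioo 0 (f (WithLp.toLp 2 p.2))}

def phi (d : ℕ) : EuclideanSpace ℝ (Fin (d+1)) ≃ᵐ (ℝ × (Fin d → ℝ)) :=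
  (MeasurableEquiv.toLp 2 (Fin (d+1) → ℝ)).symm.trans
    (MeasurableEquiv.piFinSuccAbove (fun _ : Fin (d+1) => ℝ) (Fin.last d))

lemma phi_apply (x : EuclideanSpace ℝ (Fin (d+1))) :
    phi d x = (x (Fin.last d), fun j => x j.castSucc) := by
  simp [phi, MeasurableEquiv.piFinSuccAbove, Fin.insertNthEquiv,
    Fin.succAbove_last]
  rfl

lemma phi_preserving :
    MeasurePreserving (phi d) volume ((volume : Measure ℝ).prod (volume : Measure (Fin d → ℝ))) := by
  have h1 := EuclideanSpace.volume_preserving_symm_measurableEquiv_toLp (Fin (d+1))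
  have h2 := measurePreserving_piFinSuccAbove (fun _ : Fin (d+1) => (volume : Measure ℝ)) (Fin.last d)
  rw [← volume_pi, ← volume_pi] at h2
  exact h2.comp h1

def sigma' (p : ℝ × (Fin d → ℝ)) : EuclideanSpace ℝ (Fin (d+1)) := lift' p.2 p.1

lemma proj_lift' (y : Fin d → ℝ) (t : ℝ) : proj (lift' y t) = WithLp.toLp 2 y := by
  ext j
  simp [proj, lift']

lemma lift'_last (y : Fin d → ℝ) (t : ℝ) : lift' y t (Fin.last d) = t := by
  simp [lift']

lemma sigma'_phi (x : EuclideanSpace ℝ (Fin (d+1))) : sigma' (phi d x) = x := by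
  rw [phi_apply]
  apply PiLp.ext
  intro i
  induction i using Fin.lastCases with
  | last => simp [sigma', lift']
  | cast j => simp [sigma', lift']

lemma continuous_sigma' : Continuous (sigma' (d := d)) := by
  refine (PiLp.continuous_toLp 2 (fun _ : Fin (d+1) => ℝ)).comp (f := fun p => (sigma' p).ofLp) ?_
  apply continuous_pi
  intro i
  induction i using Fin.lastCases with
  | last =>
      have : (fun p : ℝ × (Fin d → ℝ) => sigma' p (Fin.last d)) = fun p => p.1 := by
        funext p; simp [sigma', lift']
      rw [this]; exact continuous_fst
  | cast j =>
      have : (fun p : ℝ × (Fin d → ℝ) => sigma' p j.castSucc) = fun p => p.2 j := by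
        funext p; simp [sigma', lift']
      rw [this]; exact (continuous_apply j).comp continuous_snd

lemma Qf_eq_preimage (f : EuclideanSpace ℝ (Fin d) → ℝ) : Qf f = phi d ⁻¹' Sf f := by
  ext x
  simp only [Qf, Sf, Set.mem_preimage, Set.mem_setOf_eq, phi_apply, cube]
  exact Iff.rfl

lemma sigma'_mem_Qf {f : EuclideanSpace ℝ (Fin d) → ℝ} {p : ℝ × (Fin d → ℝ)} (hp : p ∈ Sf f) :
    sigma' p ∈ Qf f := by
  refine ⟨?_, ?_⟩
  · show proj (lift' p.2 p.1) ∈ cube d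
    rw [proj_lift']
    exact hp.1
  · show sigma' p (Fin.last d) ∈ Ioo 0 (f (proj (sigma' p)))
    have h1 : sigma' p (Fin.last d) = p.1 := by simp [sigma', lift']
    have h2 : proj (sigma' p) = WithLp.toLp 2 p.2 := proj_lift' _ _
    rw [h1, h2]
    exact hp.2

lemma isOpen_Sf {f : EuclideanSpace ℝ (Fin d) → ℝ} (hf : Continuous f) : IsOpen (Sf f) := by
  have h1 : IsOpen {p : ℝ × (Fin d → ℝ) | ∀ i, p.2 i ∈ Ioo (0:ℝ) 1} := by
    have : {p : ℝ × (Fin d → ℝ) | ∀ i, p.2 i ∈ Ioo (0:ℝ) 1}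
        = ⋂ i, {p : ℝ × (Fin d → ℝ) | p.2 i ∈ Ioo (0:ℝ) 1} := by
      ext p; simp
    rw [this]
    exact isOpen_iInter_of_finite fun i =>
      (isOpen_Ioo).preimage ((continuous_apply i).comp continuous_snd)
  have h2 : IsOpen {p : ℝ × (Fin d → ℝ) | 0 < p.1} := isOpen_lt continuous_const continuous_fst
  have h3 : IsOpen {p : ℝ × (Fin d → ℝ) | p.1 < f (WithLp.toLp 2 p.2)} :=
    isOpen_lt continuous_fst (hf.comp ((PiLp.continuous_toLp 2 _).comp continuous_snd))
  have : Sf f = ({p : ℝ × (Fin d → ℝ) | ∀ i, p.2 i ∈ Ioo (0:ℝ) 1}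
      ∩ ({p : ℝ × (Fin d → ℝ) | 0 < p.1} ∩ {p : ℝ × (Fin d → ℝ) | p.1 < f (WithLp.toLp 2 p.2)})) := by
    ext p
    simp only [Sf, Set.mem_setOf_eq, Set.mem_inter_iff, Set.mem_Ioo]
  rw [this]
  exact h1.inter (h2.inter h3)

end Transport

lemma measurable_indicator_of_continuousOn {α : Type*} [TopologicalSpace α] [MeasurableSpace α]
    [OpensMeasurableSpace α] {s : Set α} {g : α → ℝ} (hs : MeasurableSet s)
    (hg : ContinuousOn g s) : Measurable (s.indicator g) := by
  classical
  rw [← Set.piecewise_eq_indicator]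
  exact hg.measurable_piecewise continuousOn_const hs

lemma lift'_mem_closure {d : ℕ} {f : EuclideanSpace ℝ (Fin d) → ℝ} {y : Fin d → ℝ}
    (hy : (WithLp.toLp 2 y : EuclideanSpace ℝ (Fin d)) ∈ cube d) (hfy : 0 < f (WithLp.toLp 2 y)) :
    ∀ t ∈ Icc (0:ℝ) (f (WithLp.toLp 2 y)), lift' y t ∈ closure (Qf f) := by
  intro t ht
  have himg : (fun t => lift' y t) '' Ioo 0 (f (WithLp.toLp 2 y)) ⊆ Qf f := by
    rintro z ⟨r, hr, rfl⟩
    constructor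
    · show proj (lift' y r) ∈ cube d
      rw [proj_lift']; exact hy
    · show lift' y r (Fin.last d) ∈ Ioo 0 (f (proj (lift' y r)))
      rw [lift'_last, proj_lift']; exact hr
  have hIcc : Icc (0:ℝ) (f (WithLp.toLp 2 y)) = closure (Ioo 0 (f (WithLp.toLp 2 y))) := (closure_Ioo hfy.ne).symm
  have h1 : lift' y t ∈ (fun t => lift' y t) '' closure (Ioo 0 (f (WithLp.toLp 2 y))) :=
    ⟨t, by rw [← hIcc]; exact ht, rfl⟩
  have h2 : lift' y t ∈ closure ((fun t => lift' y t) '' Ioo 0 (f (WithLp.toLp 2 y))) :=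
    (image_closure_subset_closure_image (continuous_lift' y)) h1
  exact closure_mono himg h2

lemma inner_eval {d : ℕ} (f' : EuclideanSpace ℝ (Fin d) → ℝ)
    (G : ℝ × (Fin d → ℝ) → ℝ≥0∞) (y : Fin d → ℝ) :
    ∫⁻ t, (Sf f').indicator G (t, y) ∂volume
      = if (∀ i, y i ∈ Ioo (0:ℝ) 1) then ∫⁻ t in Ioo 0 (f' (WithLp.toLp 2 y)), G (t, y) else 0 := by
  by_cases hy : ∀ i, y i ∈ Ioo (0:ℝ) 1
  · rw [if_pos hy, ← lintegral_indicator measurableSet_Ioo]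
    apply lintegral_congr
    intro t
    by_cases ht : t ∈ Ioo 0 (f' (WithLp.toLp 2 y))
    · rw [Set.indicator_of_mem ht, Set.indicator_of_mem (show (t,y) ∈ Sf f' from ⟨hy, ht⟩)]
    · rw [Set.indicator_of_notMem ht,
        Set.indicator_of_notMem (fun hmem => ht (hmem : (t,y) ∈ Sf f').2)]
  · rw [if_neg hy]
    have : ∀ t : ℝ, (Sf f').indicator G (t, y) = 0 := fun t =>
      Set.indicator_of_notMem (fun hmem => hy (hmem : (t,y) ∈ Sf f').1) _
    simp [this]

lemma main_cont {d : ℕ} {M : ℝ} (hM : 1 < M) (f : EuclideanSpace ℝ (Fin d) → ℝ)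
    (hf : Continuous f) (hfI : ∀ y ∈ cube d, f y ∈ Icc 1 M)
    (u : EuclideanSpace ℝ (Fin (d + 1)) → ℝ) (U : Set (EuclideanSpace ℝ (Fin (d + 1))))
    (hU : IsOpen U) (hclos : closure (Qf f) ⊆ U) (hu : ContDiffOn ℝ 1 u U) :
    ∫ x in Qf f, (u x) ^ 2 ≤
      (4*M^2) * ((∫ x in Qf (fun _ => (1 : ℝ)), (u x) ^ 2) +
        ∫ x in Qf f, ‖gradient u x‖ ^ 2) := by
  have hM0 : (0:ℝ) < M := lt_trans one_pos hM
  have hQf1f : Qf (fun _ => (1:ℝ)) ⊆ Qf f := fun x hx =>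
    ⟨hx.1, hx.2.1, lt_of_lt_of_le hx.2.2 (hfI _ hx.1).1⟩
  have hQfU : Qf f ⊆ U := fun x hx => hclos (subset_closure hx)
  have hSf : IsOpen (Sf f) := isOpen_Sf hf
  have hS1 : IsOpen (Sf (fun _ : EuclideanSpace ℝ (Fin d) => (1:ℝ))) := isOpen_Sf continuous_const
  have hQfm : MeasurableSet (Qf f) := by
    rw [Qf_eq_preimage]
    exact (phi d).measurable hSf.measurableSet
  have hQ1m : MeasurableSet (Qf (fun _ : EuclideanSpace ℝ (Fin d) => (1:ℝ))) := by
    rw [Qf_eq_preimage]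
    exact (phi d).measurable hS1.measurableSet
  -- boundedness
  have hsubBall : ∀ x ∈ Qf f, ‖x‖ ≤ ((d:ℝ)+1) * M := by
    intro x hx
    have hcoord : ∀ i, |x i| ≤ M := by
      intro i
      induction i using Fin.lastCases with
      | last =>
          have h1 := hx.2
          have h2 := (hfI _ hx.1).2
          exact abs_le.mpr ⟨by linarith [h1.1], by linarith [h1.2]⟩
      | cast j =>
          have h1 : x j.castSucc ∈ Ioo (0:ℝ) 1 := hx.1 j
          exact abs_le.mpr ⟨by linarith [h1.1], by linarith [h1.2]⟩
    rw [EuclideanSpace.norm_eq]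
    have hsum : ∑ i, ‖x i‖^2 ≤ (((d:ℝ)+1) * M)^2 := by
      calc ∑ i, ‖x i‖^2 ≤ ∑ _i : Fin (d+1), M^2 := by
            apply Finset.sum_le_sum
            intro i _
            have h := hcoord i
            rw [Real.norm_eq_abs]
            nlinarith [abs_nonneg (x i)]
        _ = ((d:ℝ)+1) * M^2 := by
            rw [Finset.sum_const, Finset.card_univ, Fintype.card_fin, nsmul_eq_mul]
            push_cast; ring
        _ ≤ (((d:ℝ)+1) * M)^2 := by
            have hd0 : (0:ℝ) ≤ (d:ℝ) := Nat.cast_nonneg d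
            have hd1 : (1:ℝ) ≤ (d:ℝ)+1 := by linarith
            nlinarith [hM0, sq_nonneg M]
    calc Real.sqrt (∑ i, ‖x i‖^2) ≤ Real.sqrt ((((d:ℝ)+1) * M)^2) := Real.sqrt_le_sqrt hsum
      _ = ((d:ℝ)+1) * M := Real.sqrt_sq (by positivity)
  have hbdd : Bornology.IsBounded (Qf f) := by
    apply Bornology.IsBounded.subset (Metric.isBounded_closedBall (x := 0) (r := ((d:ℝ)+1)*M))
    intro x hx
    rw [Metric.mem_closedBall, dist_zero_right]
    exact hsubBall x hx
  have hcomp : IsCompact (closure (Qf f)) :=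
    Metric.isCompact_of_isClosed_isBounded isClosed_closure hbdd.closure
  have hvolQf : volume (Qf f) < ⊤ := lt_of_le_of_lt (measure_mono subset_closure)
    hcomp.measure_lt_top
  -- continuity and integrability
  have hcontu2 : ContinuousOn (fun x => u x ^ 2) U := (hu.continuousOn).pow 2
  have hgradcU : ContinuousOn (fun x => gradient u x) U := by
    show ContinuousOn (fun x => (InnerProductSpace.toDual ℝ _).symm (fderiv ℝ u x)) _
    exact (InnerProductSpace.toDual ℝ _).symm.continuous.comp_continuousOn
      (hu.continuousOn_fderiv_of_isOpen hU le_rfl)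
  have hcontD2 : ContinuousOn (fun x => ‖gradient u x‖ ^ 2) U := (hgradcU.norm).pow 2
  have hintegrable : ∀ {g : EuclideanSpace ℝ (Fin (d+1)) → ℝ}, ContinuousOn g U →
      IntegrableOn g (Qf f) := by
    intro g hg
    obtain ⟨C, hC⟩ := hcomp.exists_bound_of_continuousOn (hg.mono hclos)
    constructor
    · exact (hg.mono hQfU).aestronglyMeasurable hQfm
    · apply HasFiniteIntegral.restrict_of_bounded (C := C) hvolQf
      filter_upwards [ae_restrict_mem hQfm] with x hx
      exact hC x (subset_closure hx)
  have hIu2 : IntegrableOn (fun x => u x ^ 2) (Qf f) := hintegrable hcontu2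
  have hIu21 : IntegrableOn (fun x => u x ^ 2) (Qf (fun _ => (1:ℝ))) := hIu2.mono_set hQf1f
  have hID2 : IntegrableOn (fun x => ‖gradient u x‖ ^ 2) (Qf f) := hintegrable hcontD2
  have ha0 : 0 ≤ ∫ x in Qf f, u x ^ 2 := setIntegral_nonneg hQfm (fun _ _ => sq_nonneg _)
  have hb0 : 0 ≤ ∫ x in Qf (fun _ => (1:ℝ)), u x ^ 2 :=
    setIntegral_nonneg hQ1m (fun _ _ => sq_nonneg _)
  have hc0 : 0 ≤ ∫ x in Qf f, ‖gradient u x‖ ^ 2 :=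
    setIntegral_nonneg hQfm (fun _ _ => sq_nonneg _)
  -- lintegral conversions
  have hLa : ENNReal.ofReal (∫ x in Qf f, u x ^ 2)
      = ∫⁻ x in Qf f, ENNReal.ofReal (u x ^ 2) :=
    ofReal_integral_eq_lintegral_ofReal hIu2 (Filter.Eventually.of_forall fun x => sq_nonneg _)
  have hLb : ENNReal.ofReal (∫ x in Qf (fun _ => (1:ℝ)), u x ^ 2)
      = ∫⁻ x in Qf (fun _ => (1:ℝ)), ENNReal.ofReal (u x ^ 2) :=
    ofReal_integral_eq_lintegral_ofReal hIu21 (Filter.Eventually.of_forall fun x => sq_nonneg _)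
  have hLc : ENNReal.ofReal (∫ x in Qf f, ‖gradient u x‖ ^ 2)
      = ∫⁻ x in Qf f, ENNReal.ofReal (‖gradient u x‖ ^ 2) :=
    ofReal_integral_eq_lintegral_ofReal hID2 (Filter.Eventually.of_forall fun x => sq_nonneg _)
  -- product-space integrands
  set Gu : ℝ × (Fin d → ℝ) → ℝ≥0∞ := fun p => ENNReal.ofReal ((u (sigma' p))^2) with hGu
  set GD : ℝ × (Fin d → ℝ) → ℝ≥0∞ :=
    fun p => ENNReal.ofReal (‖gradient u (sigma' p)‖^2) with hGD
  have measH : ∀ {S : Set (ℝ × (Fin d → ℝ))} {g : EuclideanSpace ℝ (Fin (d+1)) → ℝ},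
      MeasurableSet S → (∀ p ∈ S, sigma' p ∈ U) → ContinuousOn g U →
      Measurable (S.indicator (fun p => ENNReal.ofReal (g (sigma' p)))) := by
    intro S g hS hmap hg
    have hco : ContinuousOn (fun p => g (sigma' p)) S :=
      hg.comp continuous_sigma'.continuousOn hmap
    have h1 : Measurable (S.indicator fun p => g (sigma' p)) :=
      measurable_indicator_of_continuousOn hS hco
    have h2 : S.indicator (fun p => ENNReal.ofReal (g (sigma' p)))
        = fun p => ENNReal.ofReal (S.indicator (fun p => g (sigma' p)) p) := by
      funext p
      by_cases hp : p ∈ S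
      · rw [Set.indicator_of_mem hp, Set.indicator_of_mem hp]
      · rw [Set.indicator_of_notMem hp, Set.indicator_of_notMem hp, ENNReal.ofReal_zero]
    rw [h2]
    exact ENNReal.measurable_ofReal.comp h1
  have hHf : Measurable ((Sf f).indicator Gu) :=
    measH hSf.measurableSet (fun p hp => hQfU (sigma'_mem_Qf hp)) hcontu2
  have hH1 : Measurable ((Sf (fun _ : EuclideanSpace ℝ (Fin d) => (1:ℝ))).indicator Gu) :=
    measH hS1.measurableSet (fun p hp => hQfU (hQf1f (sigma'_mem_Qf hp))) hcontu2
  have hHD : Measurable ((Sf f).indicator GD) :=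
    measH hSf.measurableSet (fun p hp => hQfU (sigma'_mem_Qf hp)) hcontD2
  -- transport
  have htrans : ∀ (f' : EuclideanSpace ℝ (Fin d) → ℝ) (g : EuclideanSpace ℝ (Fin (d+1)) → ℝ),
      MeasurableSet (Sf f') →
      ∫⁻ x in Qf f', ENNReal.ofReal (g x)
        = ∫⁻ p, (Sf f').indicator (fun p => ENNReal.ofReal (g (sigma' p))) p
            ∂((volume : Measure ℝ).prod (volume : Measure (Fin d → ℝ))) := by
    intro f' g hS
    have hQm : MeasurableSet (Qf f') := by
      rw [Qf_eq_preimage]; exact (phi d).measurable hS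
    have h1 : ∫⁻ x in Qf f', ENNReal.ofReal (g x)
        = ∫⁻ x in Qf f',
            ((Sf f').indicator (fun p => ENNReal.ofReal (g (sigma' p)))) (phi d x) := by
      apply setLIntegral_congr_fun hQm
      intro x hx
      beta_reduce
      have hmem : phi d x ∈ Sf f' := by
        rw [Qf_eq_preimage] at hx; exact hx
      rw [Set.indicator_of_mem hmem, sigma'_phi]
    rw [h1, Qf_eq_preimage,
      phi_preserving.setLIntegral_comp_preimage_emb (phi d).measurableEmbedding]
    conv_rhs => rw [lintegral_indicator hS]
    apply setLIntegral_congr_fun hS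
    intro p hp
    rw [Set.indicator_of_mem hp]
  have hTa : ∫⁻ x in Qf f, ENNReal.ofReal (u x ^ 2)
      = ∫⁻ y, ∫⁻ t, (Sf f).indicator Gu (t, y) := by
    rw [htrans f _ hSf.measurableSet]
    exact lintegral_prod_symm' _ hHf
  have hTb : ∫⁻ x in Qf (fun _ => (1:ℝ)), ENNReal.ofReal (u x ^ 2)
      = ∫⁻ y, ∫⁻ t, (Sf (fun _ : EuclideanSpace ℝ (Fin d) => (1:ℝ))).indicator Gu (t, y) := by
    rw [htrans _ _ hS1.measurableSet]
    exact lintegral_prod_symm' _ hH1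
  have hTc : ∫⁻ x in Qf f, ENNReal.ofReal (‖gradient u x‖ ^ 2)
      = ∫⁻ y, ∫⁻ t, (Sf f).indicator GD (t, y) := by
    rw [htrans f _ hSf.measurableSet]
    exact lintegral_prod_symm' _ hHD
  -- pointwise slice comparison
  have hpt : ∀ y : Fin d → ℝ,
      (∫⁻ t, (Sf f).indicator Gu (t, y))
        ≤ ENNReal.ofReal (2*M) *
            (∫⁻ t, (Sf (fun _ : EuclideanSpace ℝ (Fin d) => (1:ℝ))).indicator Gu (t, y))
          + ENNReal.ofReal (4*M^2) * (∫⁻ t, (Sf f).indicator GD (t, y)) := by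
    intro y
    rw [inner_eval, inner_eval, inner_eval]
    by_cases hy : ∀ i, y i ∈ Ioo (0:ℝ) 1
    · rw [if_pos hy, if_pos hy, if_pos hy]
      have hyc : (WithLp.toLp 2 y : EuclideanSpace ℝ (Fin d)) ∈ cube d := hy
      have hf1 : 1 ≤ f (WithLp.toLp 2 y) := (hfI _ hyc).1
      have hfM : f (WithLp.toLp 2 y) ≤ M := (hfI _ hyc).2
      have hx : ∀ t ∈ Icc (0:ℝ) (f (WithLp.toLp 2 y)), lift' y t ∈ U := fun t ht =>
        hclos (lift'_mem_closure hyc (by linarith) t ht)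
      exact slice_ennreal hM hU hu hf1 hfM hx
    · rw [if_neg hy, if_neg hy, if_neg hy]
      simp
  -- assemble
  have hmain : ∫⁻ x in Qf f, ENNReal.ofReal (u x ^ 2)
      ≤ ENNReal.ofReal (2*M) * (∫⁻ x in Qf (fun _ => (1:ℝ)), ENNReal.ofReal (u x ^ 2))
        + ENNReal.ofReal (4*M^2) * (∫⁻ x in Qf f, ENNReal.ofReal (‖gradient u x‖ ^ 2)) := by
    rw [hTa, hTb, hTc]
    calc ∫⁻ y, ∫⁻ t, (Sf f).indicator Gu (t, y)
        ≤ ∫⁻ y, (ENNReal.ofReal (2*M) *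
            (∫⁻ t, (Sf (fun _ : EuclideanSpace ℝ (Fin d) => (1:ℝ))).indicator Gu (t, y))
          + ENNReal.ofReal (4*M^2) * (∫⁻ t, (Sf f).indicator GD (t, y))) := lintegral_mono hpt
      _ = ENNReal.ofReal (2*M) *
            (∫⁻ y, ∫⁻ t, (Sf (fun _ : EuclideanSpace ℝ (Fin d) => (1:ℝ))).indicator Gu (t, y))
          + ENNReal.ofReal (4*M^2) * (∫⁻ y, ∫⁻ t, (Sf f).indicator GD (t, y)) := by
          rw [lintegral_add_left ((hH1.lintegral_prod_left').const_mul _),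
            lintegral_const_mul' _ _ ENNReal.ofReal_ne_top,
            lintegral_const_mul' _ _ ENNReal.ofReal_ne_top]
  rw [← hLa, ← hLb, ← hLc] at hmain
  have h2 : ENNReal.ofReal (∫ x in Qf f, u x ^ 2)
      ≤ ENNReal.ofReal (2*M * (∫ x in Qf (fun _ => (1:ℝ)), u x ^ 2)
          + 4*M^2 * (∫ x in Qf f, ‖gradient u x‖ ^ 2)) := by
    rw [ENNReal.ofReal_add (by positivity) (by positivity),
      ENNReal.ofReal_mul (p := 2*M) (by positivity),
      ENNReal.ofReal_mul (p := 4*M^2) (by positivity)]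
    exact hmain
  have h3 : ∫ x in Qf f, u x ^ 2
      ≤ 2*M * (∫ x in Qf (fun _ => (1:ℝ)), u x ^ 2)
        + 4*M^2 * (∫ x in Qf f, ‖gradient u x‖ ^ 2) :=
    (ENNReal.ofReal_le_ofReal_iff (by positivity)).mp h2
  have h4 : 2*M ≤ 4*M^2 := by nlinarith
  nlinarith [mul_le_mul_of_nonneg_right h4 hb0]

theorem stmt_14 (d : ℕ) (hd : 1 ≤ d) (M : ℝ) (hM : 1 < M) :
    ∃ C₀ > (0 : ℝ), ∀ f : EuclideanSpace ℝ (Fin d) → ℝ,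
      (∀ y ∈ cube d, f y ∈ Icc 1 M) →
      (∃ K : NNReal, LipschitzOnWith K f (cube d)) →
      ∀ (u : EuclideanSpace ℝ (Fin (d + 1)) → ℝ) (U : Set (EuclideanSpace ℝ (Fin (d + 1)))),
        IsOpen U → closure (Qf f) ⊆ U → ContDiffOn ℝ 1 u U →
        ∫ x in Qf f, (u x) ^ 2 ≤
          C₀ * ((∫ x in Qf (fun _ => (1 : ℝ)), (u x) ^ 2) +
            ∫ x in Qf f, ‖gradient u x‖ ^ 2) := by
  have hM0 : (0:ℝ) < M := lt_trans one_pos hM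
  refine ⟨4*M^2, by positivity, ?_⟩
  intro f hfI hLip u U hU hclos hu
  obtain ⟨K, hK⟩ := hLip
  obtain ⟨F, hF, hFeq⟩ := hK.extend_real
  have hQQ : Qf f = Qf F := by
    ext x
    constructor
    · rintro ⟨h1, h2⟩
      exact ⟨h1, hFeq h1 ▸ h2⟩
    · rintro ⟨h1, h2⟩
      exact ⟨h1, (hFeq h1) ▸ h2⟩
  have hFI : ∀ y ∈ cube d, F y ∈ Icc 1 M := fun y hy => hFeq hy ▸ hfI y hy
  rw [hQQ] at hclos ⊢
  exact main_cont hM F hF.continuous hFI u U hU hclos hu
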